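/- For integers n, k with 1 ≤ k ≤ n, the central factorial numbers of the second kind satisfy T(n+1,k) = (k/2)·T(n,k) + T(n,k-1|−1/2), where T(n,k|x) is defined by (1/k!)·e^{xt}·(e^{t/2} - e^{-t/2})^k = Σ_{n≥k} T(n,k|x)·t^n/n!. -/

import Mathlib

noncomputable def Tc (x : ℝ) (n k : ℕ) : ℝ :=
  iteratedDeriv n (fun t : ℝ =>
    (k.factorial : ℝ)⁻¹ * Real.exp (x * t) *
      (Real.exp (t / 2) - Real.exp (-(t / 2))) ^ k) 0

open Real

lemma Tc_smooth (c x : ℝ) (k : ℕ) {n : ℕ∞} :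
    ContDiff ℝ n (fun t : ℝ => c * Real.exp (x * t) *
      (Real.exp (t / 2) - Real.exp (-(t / 2))) ^ k) := by
  apply ContDiff.mul
  · exact contDiff_const.mul (Real.contDiff_exp.comp (contDiff_const.mul contDiff_id))
  · exact ((Real.contDiff_exp.comp (contDiff_id.div_const 2)).sub
      (Real.contDiff_exp.comp (contDiff_id.div_const 2).neg)).pow k

lemma iteratedDeriv_add' {n : ℕ} {f g : ℝ → ℝ} (hf : ContDiff ℝ n f) (hg : ContDiff ℝ n g)
    (x : ℝ) :
    iteratedDeriv n (fun t => f t + g t) x = iteratedDeriv n f x + iteratedDeriv n g x := by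
  rw [← iteratedDerivWithin_univ, ← iteratedDerivWithin_univ, ← iteratedDerivWithin_univ]
  exact iteratedDerivWithin_add (Set.mem_univ x) uniqueDiffOn_univ
    hf.contDiffWithinAt hg.contDiffWithinAt

theorem central_factorial_num_recurrence (n k : ℕ) (hk : 1 ≤ k) (hkn : k ≤ n) :
    Tc 0 (n + 1) k = ((k : ℝ) / 2) * Tc 0 n k + Tc (-(1 / 2)) n (k - 1) := by
  obtain ⟨m, rfl⟩ : ∃ m, k = m + 1 := ⟨k - 1, (Nat.succ_pred_eq_of_pos hk).symm⟩
  simp only [Tc, Nat.add_sub_cancel]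
  set f : ℝ → ℝ := fun t => ((m + 1).factorial : ℝ)⁻¹ * Real.exp (0 * t) *
      (Real.exp (t / 2) - Real.exp (-(t / 2))) ^ (m + 1) with hf
  set g : ℝ → ℝ := fun t => (m.factorial : ℝ)⁻¹ * Real.exp (-(1 / 2) * t) *
      (Real.exp (t / 2) - Real.exp (-(t / 2))) ^ m with hg
  have hd : deriv f = fun t => ((m : ℝ) + 1) / 2 * f t + g t := by
    funext t
    have h1 : HasDerivAt (fun t : ℝ => Real.exp (t / 2)) (Real.exp (t / 2) / 2) t := by
      simpa [Function.comp_def, div_eq_mul_inv] using ((Real.hasDerivAt_exp (t / 2)).comp t ((hasDerivAt_id t).div_const 2))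
    have h2 : HasDerivAt (fun t : ℝ => Real.exp (-(t / 2))) (-(Real.exp (-(t / 2)) / 2)) t := by
      have := ((Real.hasDerivAt_exp (-(t / 2))).comp t
        (((hasDerivAt_id t).div_const 2).neg))
      simpa [Function.comp_def, neg_div, div_eq_mul_inv, mul_comm] using this
    have h3 : HasDerivAt (fun t : ℝ => (Real.exp (t / 2) - Real.exp (-(t / 2))) ^ (m + 1))
        ((m + 1 : ℕ) * (Real.exp (t / 2) - Real.exp (-(t / 2))) ^ m *
          (Real.exp (t / 2) / 2 + Real.exp (-(t / 2)) / 2)) t := by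
      have := ((h1.sub h2).pow (m + 1))
      simpa [Nat.add_sub_cancel, sub_neg_eq_add, Pi.pow_def, Pi.sub_def] using this
    have h4 : HasDerivAt f (((m + 1).factorial : ℝ)⁻¹ *
        ((m + 1 : ℕ) * (Real.exp (t / 2) - Real.exp (-(t / 2))) ^ m *
          (Real.exp (t / 2) / 2 + Real.exp (-(t / 2)) / 2))) t := by
      have := h3.const_mul (((m + 1).factorial : ℝ)⁻¹)
      simpa [hf, zero_mul, Real.exp_zero, mul_one, mul_assoc] using this
    rw [h4.deriv]
    simp only [hf, hg, zero_mul, Real.exp_zero, mul_one]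
    have hfac : ((m + 1).factorial : ℝ) = (m + 1 : ℝ) * m.factorial := by
      push_cast [Nat.factorial_succ]; ring
    have hne : (m.factorial : ℝ) ≠ 0 := Nat.cast_ne_zero.mpr m.factorial_ne_zero
    have hne1 : (m : ℝ) + 1 ≠ 0 := by positivity
    have hexp : Real.exp (-(1 / 2) * t) = Real.exp (-(t / 2)) := by ring_nf
    rw [hexp, pow_succ, hfac]
    field_simp
    push_cast
    ring
  rw [iteratedDeriv_succ', hd]
  have hcf : ContDiff ℝ n f := Tc_smooth _ _ _
  have hcg : ContDiff ℝ n g := Tc_smooth _ _ _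
  have : iteratedDeriv n (fun t => ((m : ℝ) + 1) / 2 * f t + g t) 0
      = ((m : ℝ) + 1) / 2 * iteratedDeriv n f 0 + iteratedDeriv n g 0 := by
    rw [iteratedDeriv_add' ((contDiff_const.mul hcf : ContDiff ℝ n _)) hcg]
    congr 1
    rw [← iteratedDerivWithin_univ, ← iteratedDerivWithin_univ]
    exact iteratedDerivWithin_const_mul (Set.mem_univ 0) uniqueDiffOn_univ _ hcf.contDiffWithinAt
  rw [this]
  push_cast
  ring
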